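/- arXiv:1104.0120 — 2 statements merged into one kernel-verified Lean document; each statement's English description precedes it below -/
import Mathlib

section
/- Let p ≥ 5, e ≥ 2, and let π satisfy v_p(π) = 1/e. Suppose F = Σ a_{α_0...α_r} x^{α_0} (δ_π x)^{α_1} ··· (δ_π^r x)^{α_r} is a restricted power series over R_π with 1 ≤ r ≤ e-1, and each δ_π^i x (1 ≤ i ≤ e-1) equals π·G_i(δ_p x,...,δ_p^i x) for polynomials G_i over R_π of degree ≤ p^{i-1}. Then, expanded in the variables x, δ_p x, ..., δ_p^r x, the coefficient of any monomial x^α (δ_p x)^{β_1}···(δ_p^r x)^{β_r} in F has p-adic valuation at least (1/e)·(|β_1+...+β_r|/p^{r-1} - 1). In particular F is overconvergent in the variables δ_p x,...,δ_p^r x with radius ≥ p^{1/(p^{r-1} e)}. -/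
open Filter

/-- The total degree of a monomial in the `δ`-variables (levels `1,…,r`), ignoring the
level-`0` variables `x`.  Variables are indexed by pairs `(i, j)`: level `i : Fin (r+1)`
and component `j : Fin d`. -/
def DeltaDeg (r d : ℕ) (mo : (Fin (r + 1) × Fin d) →₀ ℕ) : ℕ :=
  ∑ v : Fin (r + 1) × Fin d, if (v.1 : ℕ) = 0 then 0 else mo v

lemma nonarch_finset_sum {R : Type*} [NormedCommRing R]
    (hna : ∀ a b : R, ‖a + b‖ ≤ max ‖a‖ ‖b‖) {ι : Type*} (s : Finset ι) (f : ι → R)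
    {C : ℝ} (hC : 0 ≤ C) (h : ∀ i ∈ s, ‖f i‖ ≤ C) : ‖∑ i ∈ s, f i‖ ≤ C := by
  classical
  induction s using Finset.cons_induction with
  | empty => simpa using hC
  | cons i s his ih =>
    rw [Finset.sum_cons]
    refine le_trans (hna _ _) (max_le (h i (Finset.mem_cons_self _ _))
      (ih fun j hj => h j (Finset.mem_cons.mpr (Or.inr hj))))

lemma nonarch_tsum {R : Type*} [NormedCommRing R] [CompleteSpace R]
    (hna : ∀ a b : R, ‖a + b‖ ≤ max ‖a‖ ‖b‖) {ι : Type*} (f : ι → R)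
    {C : ℝ} (hC : 0 ≤ C) (h : ∀ i, ‖f i‖ ≤ C) : ‖∑' i, f i‖ ≤ C := by
  by_cases hs : Summable f
  · have h2 : Tendsto (fun s : Finset ι => ‖∑ i ∈ s, f i‖) atTop (nhds ‖∑' i, f i‖) :=
      (continuous_norm.tendsto _).comp hs.hasSum
    exact le_of_tendsto h2 (Eventually.of_forall fun s =>
      nonarch_finset_sum hna s f hC fun i _ => h i)
  · rw [tsum_eq_zero_of_not_summable hs]; simpa using hC

lemma deltaDeg_add (r d : ℕ) (m₁ m₂ : (Fin (r + 1) × Fin d) →₀ ℕ) :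
    DeltaDeg r d (m₁ + m₂) = DeltaDeg r d m₁ + DeltaDeg r d m₂ := by
  unfold DeltaDeg
  rw [← Finset.sum_add_distrib]
  refine Finset.sum_congr rfl fun v _ => ?_
  by_cases h : (v.1 : ℕ) = 0 <;> simp [h]

/-- Coefficient/degree control predicate. -/
def GoodPoly {R : Type*} [NormedCommRing R] (r d : ℕ) (c : ℝ) (K : ℕ) (w : ℕ)
    (Q : MvPolynomial (Fin (r + 1) × Fin d) R) : Prop :=
  ∀ mo, (MvPolynomial.coeff mo Q ≠ 0 → DeltaDeg r d mo ≤ w * K) ∧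
    ∀ b : R, ‖b * MvPolynomial.coeff mo Q‖ ≤ ‖b‖ * c ^ w

lemma goodPoly_one {R : Type*} [NormedCommRing R] (r d : ℕ) (c : ℝ) (K : ℕ) :
    GoodPoly r d c K 0 (1 : MvPolynomial (Fin (r + 1) × Fin d) R) := by
  intro mo
  constructor
  · intro h
    rw [MvPolynomial.coeff_one] at h
    split_ifs at h with h0
    · subst h0; simp [DeltaDeg]
    · simp at h
  · intro b
    rw [MvPolynomial.coeff_one]
    split_ifs with h0 <;> simp

lemma goodPoly_mul {R : Type*} [NormedCommRing R]
    (hna : ∀ a b : R, ‖a + b‖ ≤ max ‖a‖ ‖b‖) {r d : ℕ} {c : ℝ} (hc : 0 ≤ c) {K : ℕ}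
    {w₁ w₂ : ℕ} {Q₁ Q₂ : MvPolynomial (Fin (r + 1) × Fin d) R}
    (h₁ : GoodPoly r d c K w₁ Q₁) (h₂ : GoodPoly r d c K w₂ Q₂) :
    GoodPoly r d c K (w₁ + w₂) (Q₁ * Q₂) := by
  intro mo
  constructor
  · intro h
    rw [MvPolynomial.coeff_mul] at h
    obtain ⟨pr, hpr, hne⟩ := Finset.exists_ne_zero_of_sum_ne_zero h
    rw [Finset.HasAntidiagonal.mem_antidiagonal] at hpr
    have h1 : MvPolynomial.coeff pr.1 Q₁ ≠ 0 := fun hz => hne (by rw [hz, zero_mul])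
    have h2 : MvPolynomial.coeff pr.2 Q₂ ≠ 0 := fun hz => hne (by rw [hz, mul_zero])
    calc DeltaDeg r d mo = DeltaDeg r d pr.1 + DeltaDeg r d pr.2 := by
          rw [← hpr, deltaDeg_add]
      _ ≤ w₁ * K + w₂ * K := Nat.add_le_add ((h₁ pr.1).1 h1) ((h₂ pr.2).1 h2)
      _ = (w₁ + w₂) * K := (add_mul _ _ _).symm
  · intro b
    rw [MvPolynomial.coeff_mul, Finset.mul_sum]
    refine nonarch_finset_sum hna _ _ (by positivity) fun pr _ => ?_
    calc ‖b * (MvPolynomial.coeff pr.1 Q₁ * MvPolynomial.coeff pr.2 Q₂)‖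
        = ‖b * MvPolynomial.coeff pr.1 Q₁ * MvPolynomial.coeff pr.2 Q₂‖ := by
          rw [mul_assoc]
      _ ≤ ‖b * MvPolynomial.coeff pr.1 Q₁‖ * c ^ w₂ := (h₂ pr.2).2 _
      _ ≤ ‖b‖ * c ^ w₁ * c ^ w₂ :=
          mul_le_mul_of_nonneg_right ((h₁ pr.1).2 b) (by positivity)
      _ = ‖b‖ * c ^ (w₁ + w₂) := by rw [mul_assoc, ← pow_add]

lemma goodPoly_pow {R : Type*} [NormedCommRing R]
    (hna : ∀ a b : R, ‖a + b‖ ≤ max ‖a‖ ‖b‖) {r d : ℕ} {c : ℝ} (hc : 0 ≤ c) {K : ℕ}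
    {w : ℕ} {Q : MvPolynomial (Fin (r + 1) × Fin d) R}
    (h : GoodPoly r d c K w Q) (k : ℕ) : GoodPoly r d c K (k * w) (Q ^ k) := by
  induction k with
  | zero => simpa using goodPoly_one r d c K
  | succ n ih =>
    have h2 := goodPoly_mul hna hc ih h
    have he : (n + 1) * w = n * w + w := by ring
    rw [he, pow_succ]
    exact h2

lemma goodPoly_prod {R : Type*} [NormedCommRing R]
    (hna : ∀ a b : R, ‖a + b‖ ≤ max ‖a‖ ‖b‖) {r d : ℕ} {c : ℝ} (hc : 0 ≤ c) {K : ℕ}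
    {ι : Type*} (s : Finset ι) (w : ι → ℕ) (Q : ι → MvPolynomial (Fin (r + 1) × Fin d) R)
    (h : ∀ i ∈ s, GoodPoly r d c K (w i) (Q i)) :
    GoodPoly r d c K (∑ i ∈ s, w i) (∏ i ∈ s, Q i) := by
  classical
  induction s using Finset.cons_induction with
  | empty => simpa using goodPoly_one r d c K
  | cons i s his ih =>
    rw [Finset.sum_cons, Finset.prod_cons]
    exact goodPoly_mul hna hc (h i (Finset.mem_cons_self _ _))
      (ih fun j hj => h j (Finset.mem_cons.mpr (Or.inr hj)))

lemma deltaDeg_le_sum (r d : ℕ) (mo : (Fin (r + 1) × Fin d) →₀ ℕ) :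
    DeltaDeg r d mo ≤ mo.sum fun _ n => n := by
  unfold DeltaDeg
  rw [Finsupp.sum_fintype _ _ (fun _ => rfl)]
  refine Finset.sum_le_sum fun v _ => ?_
  split_ifs <;> simp

/-- Quantitative `δ_p`-overconvergence.  Let `v_p(π) = 1/e` (i.e. `‖π‖ = p^(-1/e)`),
`1 ≤ r ≤ e-1`, and let `F = Σ a_α x^(α₀) (δ_π x)^(α₁) ⋯ (δ_π^r x)^(α_r)` be a restricted
series with integral coefficients.  Substitute `δ_π^i x = π·G_i(δ_p x,…,δ_p^i x)` where
`G_i` has integral coefficients, total degree `≤ p^(i-1)` and involves only the variables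
of levels `1,…,i`.  Then the coefficient of each monomial `x^α (δ_p x)^(β₁)⋯(δ_p^r x)^(β_r)`
of the substituted series (computed as a `tsum`) has `p`-adic valuation at least
`(1/e)·(|β₁+⋯+β_r|/p^(r-1) - 1)`, i.e. norm `≤ p^(-(1/e)(|β|/p^(r-1)-1))`.
In particular `F` is overconvergent in the `δ_p`-variables with radius `≥ p^(1/(p^(r-1)e))`. -/
theorem stmt12 {R : Type*} [NormedCommRing R] [CompleteSpace R]
    (hna : ∀ a b : R, ‖a + b‖ ≤ max ‖a‖ ‖b‖)
    (p e r d : ℕ) (hp : p.Prime) (h5 : 5 ≤ p) (he : 2 ≤ e) (hr1 : 1 ≤ r) (hre : r ≤ e - 1)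
    (π : R) (hπ : ‖π‖ = (p : ℝ) ^ (-(1 : ℝ) / (e : ℝ)))
    (a : ((Fin (r + 1) × Fin d) →₀ ℕ) → R)
    (ha1 : ∀ α, ‖a α‖ ≤ 1)
    (har : Tendsto a cofinite (nhds 0))
    (G : Fin (r + 1) × Fin d → MvPolynomial (Fin (r + 1) × Fin d) R)
    (hGdeg : ∀ v, (G v).totalDegree ≤ p ^ ((v.1 : ℕ) - 1))
    (hGcoeff : ∀ v mo, ‖MvPolynomial.coeff mo (G v)‖ ≤ 1)
    (hGvars : ∀ v, ∀ w ∈ (G v).vars, 1 ≤ (w.1 : ℕ) ∧ (w.1 : ℕ) ≤ (v.1 : ℕ)) :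
    ∀ mo : (Fin (r + 1) × Fin d) →₀ ℕ,
      ‖∑' α : (Fin (r + 1) × Fin d) →₀ ℕ,
          a α * MvPolynomial.coeff mo (Finsupp.prod α fun v k =>
            (if (v.1 : ℕ) = 0 then MvPolynomial.X v
              else MvPolynomial.C π * G v) ^ k)‖ ≤
        (p : ℝ) ^ (-(1 / (e : ℝ)) * ((DeltaDeg r d mo : ℝ) / (p : ℝ) ^ (r - 1) - 1)) := by
  intro mo
  classical
  have hp1 : (1 : ℝ) < (p : ℝ) := by
    have : (5 : ℝ) ≤ (p : ℝ) := by exact_mod_cast h5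
    linarith
  have hp0 : (0 : ℝ) < (p : ℝ) := by linarith
  have he0 : (0 : ℝ) < (e : ℝ) := by
    have : (2 : ℝ) ≤ (e : ℝ) := by exact_mod_cast he
    linarith
  have hc0 : (0 : ℝ) ≤ ‖π‖ := norm_nonneg _
  set K : ℕ := p ^ (r - 1) with hK
  -- each factor is good
  have good_factor : ∀ v : Fin (r + 1) × Fin d,
      GoodPoly r d ‖π‖ K (if (v.1 : ℕ) = 0 then 0 else 1)
        (if (v.1 : ℕ) = 0 then MvPolynomial.X v else MvPolynomial.C π * G v) := by
    intro v
    by_cases hv : (v.1 : ℕ) = 0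
    · rw [if_pos hv, if_pos hv]
      intro m
      constructor
      · intro h
        rw [MvPolynomial.coeff_X'] at h
        split_ifs at h with h0
        · subst h0
          have : DeltaDeg r d (Finsupp.single v 1) = 0 := by
            refine Finset.sum_eq_zero fun v' _ => ?_
            split_ifs with h1
            · rfl
            · rw [Finsupp.single_apply, if_neg]
              intro hvv
              exact h1 (hvv ▸ hv)
          simp [this]
        · simp at h
      · intro b
        rw [MvPolynomial.coeff_X']
        split_ifs with h0 <;> simp
    · rw [if_neg hv, if_neg hv]
      intro m
      constructor
      · intro h
        rw [MvPolynomial.coeff_C_mul] at h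
        have hg : MvPolynomial.coeff m (G v) ≠ 0 := fun hz => h (by rw [hz, mul_zero])
        have hmem : m ∈ (G v).support := MvPolynomial.mem_support_iff.mpr hg
        calc DeltaDeg r d m ≤ m.sum fun _ n => n := deltaDeg_le_sum r d m
          _ ≤ (G v).totalDegree := MvPolynomial.le_totalDegree hmem
          _ ≤ p ^ ((v.1 : ℕ) - 1) := hGdeg v
          _ ≤ p ^ (r - 1) := by
              refine Nat.pow_le_pow_right hp.one_lt.le ?_
              exact Nat.sub_le_sub_right (Nat.lt_succ_iff.mp v.1.isLt) 1
          _ = 1 * K := (one_mul K).symm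
      · intro b
        rw [MvPolynomial.coeff_C_mul, ← mul_assoc]
        calc ‖b * π * MvPolynomial.coeff m (G v)‖
            ≤ ‖b * π‖ * ‖MvPolynomial.coeff m (G v)‖ := norm_mul_le _ _
          _ ≤ ‖b‖ * ‖π‖ * 1 :=
              mul_le_mul (norm_mul_le _ _) (hGcoeff v m) (norm_nonneg _)
                (by positivity)
          _ = ‖b‖ * ‖π‖ ^ 1 := by ring
  -- weight of a multi-index
  set m : (((Fin (r + 1) × Fin d)) →₀ ℕ) → ℕ :=
    fun α => ∑ v ∈ α.support, α v * (if (v.1 : ℕ) = 0 then 0 else 1) with hm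
  have good_prod : ∀ α : (Fin (r + 1) × Fin d) →₀ ℕ,
      GoodPoly r d ‖π‖ K (m α) (Finsupp.prod α fun v k =>
        (if (v.1 : ℕ) = 0 then MvPolynomial.X v
          else MvPolynomial.C π * G v) ^ k) := by
    intro α
    exact goodPoly_prod hna hc0 α.support _ _
      (fun v _ => goodPoly_pow hna hc0 (good_factor v) (α v))
  -- the target bound
  set C : ℝ := (p : ℝ) ^ (-(1 / (e : ℝ)) * ((DeltaDeg r d mo : ℝ) / (p : ℝ) ^ (r - 1) - 1))
    with hC
  have hC0 : 0 ≤ C := by rw [hC]; positivity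
  refine nonarch_tsum hna _ hC0 fun α => ?_
  by_cases hz : MvPolynomial.coeff mo (Finsupp.prod α fun v k =>
      (if (v.1 : ℕ) = 0 then MvPolynomial.X v
        else MvPolynomial.C π * G v) ^ k) = 0
  · rw [hz, mul_zero, norm_zero]; exact hC0
  · have hD : DeltaDeg r d mo ≤ m α * K := (good_prod α mo).1 hz
    have hn : ‖a α * MvPolynomial.coeff mo (Finsupp.prod α fun v k =>
        (if (v.1 : ℕ) = 0 then MvPolynomial.X v
          else MvPolynomial.C π * G v) ^ k)‖ ≤ ‖π‖ ^ (m α) := by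
      refine le_trans ((good_prod α mo).2 (a α)) ?_
      have := mul_le_mul_of_nonneg_right (ha1 α) (pow_nonneg hc0 (m α))
      linarith [this]
    refine le_trans hn ?_
    rw [hπ, ← Real.rpow_natCast ((p : ℝ) ^ (-(1 : ℝ) / (e : ℝ))) (m α),
      ← Real.rpow_mul hp0.le]
    rw [hC]
    rw [Real.rpow_le_rpow_left_iff hp1]
    have hPpos : (0 : ℝ) < (p : ℝ) ^ (r - 1) := by positivity
    have hDr : (DeltaDeg r d mo : ℝ) ≤ (m α : ℝ) * (p : ℝ) ^ (r - 1) := by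
      have : ((DeltaDeg r d mo : ℕ) : ℝ) ≤ ((m α * K : ℕ) : ℝ) := by exact_mod_cast hD
      rw [Nat.cast_mul, hK, Nat.cast_pow] at this
      exact_mod_cast this
    have hdiv : (DeltaDeg r d mo : ℝ) / (p : ℝ) ^ (r - 1) ≤ (m α : ℝ) :=
      (div_le_iff₀ hPpos).mpr hDr
    have hu : (0 : ℝ) < 1 / (e : ℝ) := by positivity
    have hkey : (1 / (e : ℝ)) * ((DeltaDeg r d mo : ℝ) / (p : ℝ) ^ (r - 1) - 1) ≤
        (1 / (e : ℝ)) * (m α : ℝ) :=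
      mul_le_mul_of_nonneg_left (by linarith) hu.le
    calc (-1 : ℝ) / (e : ℝ) * ((m α : ℕ) : ℝ)
        = -((1 / (e : ℝ)) * ((m α : ℕ) : ℝ)) := by ring
      _ ≤ -((1 / (e : ℝ)) * ((DeltaDeg r d mo : ℝ) / (p : ℝ) ^ (r - 1) - 1)) :=
          neg_le_neg hkey
      _ = -(1 / (e : ℝ)) * ((DeltaDeg r d mo : ℝ) / (p : ℝ) ^ (r - 1) - 1) := by ring
end

section
/- Let f = Σ_{n≥1} p^n y_1^n ∈ R_p[y_1, y_2]^ (p-adic completion). Then: (1) f is overconvergent in the variables (y_1,y_2) with radius ≥ p; (2) for every ρ > 1 there exists an R_p-algebra automorphism σ of R_p[y_1,y_2] such that the induced automorphism σ̂ of R_p[y_1,y_2]^ sends f to a series that is not overconvergent in (y_1,y_2) with radius ≥ ρ. Specifically, for m with ρ^m > p, the automorphism σ(y_1) = y_1 + y_2^m, σ(y_2) = y_2 works. -/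
/-- Let `f = Σ_{n≥1} p^n y₁^n`, viewed by its coefficient family on monomials
`y₁^(β 0)·y₂^(β 1)`.  Then (1) `f` is overconvergent in `(y₁,y₂)` with radius `≥ p`;
(2) for every `ρ > 1` and every `m` with `ρ^m > p`, the automorphism
`σ(y₁) = y₁ + y₂^m`, `σ(y₂) = y₂` sends `f` to `σ̂f = Σ_{n≥1} p^n (y₁+y₂^m)^n`, whose
coefficient family (computed by the binomial theorem) is not overconvergent in
`(y₁,y₂)` with radius `≥ ρ`. -/
theorem stmt14 {R : Type*} [NormedField R] (p : ℕ) (hp : p.Prime)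
    (hnp : ‖((p : R))‖ = (p : ℝ)⁻¹) :
    (∃ M : ℝ, ∀ β : Fin 2 →₀ ℕ,
      ‖(if β 1 = 0 ∧ 1 ≤ β 0 then ((p : R) ^ (β 0)) else 0)‖ * (p : ℝ) ^ (β 0 + β 1) ≤ M) ∧
    (∀ ρ : ℝ, 1 < ρ → ∀ m : ℕ, (p : ℝ) < ρ ^ m →
      ¬ ∃ M : ℝ, ∀ β : Fin 2 →₀ ℕ,
        ‖(if m ∣ β 1 ∧ 1 ≤ β 0 + β 1 / m
            then ((p : R) ^ (β 0 + β 1 / m)) * ((Nat.choose (β 0 + β 1 / m) (β 1 / m) : R))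
            else 0)‖ * ρ ^ (β 0 + β 1) ≤ M) := by
  have hp1 : (1:ℝ) < p := by exact_mod_cast hp.one_lt
  have hp0 : (0:ℝ) < p := by linarith
  constructor
  · refine ⟨1, fun β => ?_⟩
    split_ifs with h
    · obtain ⟨h1, _⟩ := h
      rw [norm_pow, hnp, h1, add_zero, inv_pow, inv_mul_cancel₀ (by positivity)]
    · simp
  · rintro ρ hρ m hm ⟨M, hM⟩
    have hm0 : 0 < m := by
      rcases Nat.eq_zero_or_pos m with h | h
      · subst h; simp at hm; exact absurd hm hp.ne_zero
      · exact h
    have hq : 1 < ρ ^ m / p := by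
      rw [lt_div_iff₀ hp0]; linarith
    obtain ⟨n, hn⟩ := pow_unbounded_of_one_lt M hq
    have key := hM (Finsupp.single 1 (m * (n + 1)))
    have hb0 : (Finsupp.single 1 (m * (n + 1)) : Fin 2 →₀ ℕ) 0 = 0 := by
      simp [Finsupp.single_apply]
    have hb1 : (Finsupp.single 1 (m * (n + 1)) : Fin 2 →₀ ℕ) 1 = m * (n + 1) := by
      simp
    rw [hb0, hb1, Nat.mul_div_cancel_left _ hm0] at key
    rw [if_pos ⟨⟨n + 1, rfl⟩, by omega⟩] at key
    simp only [zero_add] at key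
    rw [Nat.choose_self, Nat.cast_one, mul_one, norm_pow, hnp,
      pow_mul, inv_pow] at key
    have hle : (ρ ^ m / p) ^ n ≤ ((p:ℝ) ^ (n+1))⁻¹ * (ρ ^ m) ^ (n+1) := by
      calc (ρ ^ m / p) ^ n ≤ (ρ ^ m / p) ^ (n+1) := pow_le_pow_right₀ hq.le n.le_succ
        _ = _ := by rw [div_pow, div_eq_mul_inv, mul_comm]
    linarith
end
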